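/- For N = 2 with parameters λ₁ = v₁ + iμ₁, λ₂ = v₂ + iμ₂ (μ₁, μ₂ > 0) and nonzero γ₁, γ₂ ∈ ℂ, the matrix M with M_{jk} = (1 + γⱼγ̄ₖ)/(λⱼ - λ̄ₖ) is invertible provided λ₁ ≠ λ₂. -/

import Mathlib

open Complex

/-- For `N = 2`, the matrix `M` with `M_{jk} = (1 + γⱼγ̄ₖ)/(λⱼ - λ̄ₖ)`,
`λⱼ = vⱼ + iμⱼ`, `μⱼ > 0`, `γⱼ ≠ 0`, is invertible provided `λ₁ ≠ λ₂`. -/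
theorem M_invertible_N2 (v μ : Fin 2 → ℝ) (hμ : ∀ j, 0 < μ j)
    (hlam : (v 0 : ℂ) + Complex.I * (μ 0 : ℂ) ≠ (v 1 : ℂ) + Complex.I * (μ 1 : ℂ))
    (γ : Fin 2 → ℂ) (hγ : ∀ j, γ j ≠ 0)
    (M : Matrix (Fin 2) (Fin 2) ℂ)
    (hM : ∀ j k, M j k =
      (1 + γ j * starRingEnd ℂ (γ k)) /
        (((v j : ℂ) + Complex.I * (μ j : ℂ)) -
          starRingEnd ℂ ((v k : ℂ) + Complex.I * (μ k : ℂ)))) :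
    IsUnit M.det := by
  have hμ0 := (hμ 0); have hμ1 := (hμ 1)
  set p := Complex.normSq (γ 0) with hp
  set q := Complex.normSq (γ 1) with hq
  set Q := Complex.normSq (1 + γ 0 * starRingEnd ℂ (γ 1)) with hQdef
  set S := (v 0 - v 1)^2 + (μ 0 + μ 1)^2 with hSdef
  have hS : 0 < S := by positivity
  -- closed forms
  have e1 : (1 + γ 0 * starRingEnd ℂ (γ 0)) = ((1+p : ℝ) : ℂ) := by
    rw [Complex.mul_conj]; push_cast; ring
  have e2 : (1 + γ 1 * starRingEnd ℂ (γ 1)) = ((1+q : ℝ) : ℂ) := by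
    rw [Complex.mul_conj]; push_cast; ring
  have e3 : (1 + γ 0 * starRingEnd ℂ (γ 1)) * (1 + γ 1 * starRingEnd ℂ (γ 0)) = ((Q : ℝ) : ℂ) := by
    have h : (1 + γ 1 * starRingEnd ℂ (γ 0)) = starRingEnd ℂ (1 + γ 0 * starRingEnd ℂ (γ 1)) := by
      simp only [map_add, map_mul, map_one, Complex.conj_conj]; ring
    rw [h, Complex.mul_conj, hQdef]
  have e4 : ((((v 0 : ℂ) + Complex.I * (μ 0 : ℂ)) - starRingEnd ℂ ((v 0 : ℂ) + Complex.I * (μ 0 : ℂ)))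
      * (((v 1 : ℂ) + Complex.I * (μ 1 : ℂ)) - starRingEnd ℂ ((v 1 : ℂ) + Complex.I * (μ 1 : ℂ))))
      = ((-(4*μ 0*μ 1) : ℝ) : ℂ) := by
    simp only [map_add, map_mul, Complex.conj_ofReal, Complex.conj_I]
    push_cast
    linear_combination (4*(μ 0:ℂ)*(μ 1:ℂ)) * Complex.I_sq
  have e5 : ((((v 0 : ℂ) + Complex.I * (μ 0 : ℂ)) - starRingEnd ℂ ((v 1 : ℂ) + Complex.I * (μ 1 : ℂ)))
      * (((v 1 : ℂ) + Complex.I * (μ 1 : ℂ)) - starRingEnd ℂ ((v 0 : ℂ) + Complex.I * (μ 0 : ℂ))))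
      = ((-S : ℝ) : ℂ) := by
    simp only [map_add, map_mul, Complex.conj_ofReal, Complex.conj_I, hSdef]
    push_cast
    linear_combination (((μ 0:ℂ)+(μ 1:ℂ))^2) * Complex.I_sq
  have hdet : M.det = ((Q / S - (1+p)*(1+q)/(4*μ 0*μ 1) : ℝ) : ℂ) := by
    rw [Matrix.det_fin_two, hM 0 0, hM 0 1, hM 1 0, hM 1 1, div_mul_div_comm, div_mul_div_comm,
      e1, e2, e3, e4, e5]
    rw [← Complex.ofReal_mul, ← Complex.ofReal_div, ← Complex.ofReal_div, ← Complex.ofReal_sub,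
      Complex.ofReal_inj, div_neg, div_neg]
    ring
  rw [isUnit_iff_ne_zero, hdet, ne_eq, Complex.ofReal_eq_zero]
  have hQle : Q ≤ (1+p)*(1+q) := by
    have habs : ‖γ 0 * starRingEnd ℂ (γ 1)‖ =
        ‖γ 0‖ * ‖γ 1‖ := by
      simp [map_mul]
    have hns : Complex.normSq (γ 0 * starRingEnd ℂ (γ 1)) = p * q := by
      simp [Complex.normSq_mul, Complex.normSq_conj, hp, hq]
    have hexp : Q = 1 + 2 * (γ 0 * starRingEnd ℂ (γ 1)).re + p * q := by
      rw [hQdef, Complex.normSq_add]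
      simp [hns]
      ring
    have hre : (γ 0 * starRingEnd ℂ (γ 1)).re ≤ ‖γ 0‖ * ‖γ 1‖ := by
      rw [← habs]; exact Complex.re_le_norm _
    have hsum : 2 * (‖γ 0‖ * ‖γ 1‖) ≤ p + q := by
      nlinarith [sq_nonneg (‖γ 0‖ - ‖γ 1‖),
        Complex.sq_norm (γ 0), Complex.sq_norm (γ 1)]
    nlinarith [hexp, hre, hsum]
  have hSgt : 4 * μ 0 * μ 1 < S := by
    have hvm : v 0 ≠ v 1 ∨ μ 0 ≠ μ 1 := by
      by_contra h
      push_neg at h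
      exact hlam (by rw [h.1, h.2])
    rw [hSdef]
    rcases hvm with h | h
    · have h' : v 0 - v 1 ≠ 0 := sub_ne_zero.mpr h
      have : (0:ℝ) < (v 0 - v 1)^2 := lt_of_le_of_ne (sq_nonneg _) (Ne.symm (pow_ne_zero 2 h'))
      nlinarith [sq_nonneg (μ 0 - μ 1)]
    · have h' : μ 0 - μ 1 ≠ 0 := sub_ne_zero.mpr h
      have : (0:ℝ) < (μ 0 - μ 1)^2 := lt_of_le_of_ne (sq_nonneg _) (Ne.symm (pow_ne_zero 2 h'))
      nlinarith [sq_nonneg (v 0 - v 1)]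
  have hQ0 : 0 ≤ Q := Complex.normSq_nonneg _
  have hp0 : 0 ≤ p := Complex.normSq_nonneg _
  have hq0 : 0 ≤ q := Complex.normSq_nonneg _
  have hlt : Q / S < (1+p)*(1+q)/(4*μ 0*μ 1) := by
    calc Q / S ≤ (1+p)*(1+q) / S := by gcongr
        _ < (1+p)*(1+q)/(4*μ 0*μ 1) :=
          div_lt_div_of_pos_left (by nlinarith) (by positivity) hSgt
  intro h
  have := sub_eq_zero.mp h
  linarith
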